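/- Let n ≥ 1, let X, Y be n×n complex matrices, let v ∈ ℂⁿ be a column vector and w: ℂⁿ → ℂ a linear functional (row vector), and suppose YX − XY = Idₙ + v·w, where v·w denotes the rank-one matrix sending ξ to w(ξ)·v. Then: (a) the only subspace W ⊆ ℂⁿ satisfying XW ⊆ W, YW ⊆ W and W ⊆ ker(w) is W = 0; and (b) the only subspace W ⊆ ℂⁿ satisfying XW ⊆ W, YW ⊆ W and v ∈ W is W = ℂⁿ. (Hence the corresponding representation of dimension vector (n,1) of the deformed preprojective algebra of the framed one-loop quiver is simple.) -/
import Mathlib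

set_option maxHeartbeats 1000000


/-- If `Y*X - X*Y = 1 + v·w` (a rank-one perturbation of the identity),
then: (a) the only subspace `W ⊆ ℂⁿ` stable under `X` and `Y` and contained in `ker w`
is `0`; (b) the only subspace stable under `X` and `Y` and containing `v` is `ℂⁿ`.
Hence the corresponding dimension-`(n,1)` representation of the deformed preprojective
algebra of the framed one-loop quiver is simple. -/
theorem stmt16 (n : ℕ) (hn : 1 ≤ n) (X Y : Matrix (Fin n) (Fin n) ℂ)
    (v w : Fin n → ℂ)
    (h : Y * X - X * Y = 1 + Matrix.of (fun i j => v i * w j)) :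
    (∀ W : Submodule ℂ (Fin n → ℂ),
        (∀ x ∈ W, X.mulVec x ∈ W) → (∀ x ∈ W, Y.mulVec x ∈ W) →
        (∀ x ∈ W, ∑ j, w j * x j = 0) → W = ⊥) ∧
    (∀ W : Submodule ℂ (Fin n → ℂ),
        (∀ x ∈ W, X.mulVec x ∈ W) → (∀ x ∈ W, Y.mulVec x ∈ W) →
        v ∈ W → W = ⊤) := by
  -- Pointwise form of the commutation relation.
  have key : ∀ x : Fin n → ℂ, Y.mulVec (X.mulVec x) - X.mulVec (Y.mulVec x)
      = x + (∑ j, w j * x j) • v := by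
    intro x
    have h' := congrArg (fun M : Matrix (Fin n) (Fin n) ℂ => M.mulVec x) h
    simp only [Matrix.sub_mulVec, Matrix.add_mulVec, Matrix.one_mulVec,
      ← Matrix.mulVec_mulVec] at h'
    rw [h']
    congr 1
    funext i
    simp only [Matrix.mulVec, dotProduct, Matrix.of_apply, Pi.smul_apply,
      smul_eq_mul, Finset.sum_mul]
    exact Finset.sum_congr rfl fun j _ => by ring
  constructor
  · -- (a) trace argument on the invariant subspace W.
    intro W hX hY hw
    have hX' : ∀ x ∈ W, X.mulVecLin x ∈ W := by
      simpa [Matrix.mulVecLin_apply] using hX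
    have hY' : ∀ x ∈ W, Y.mulVecLin x ∈ W := by
      simpa [Matrix.mulVecLin_apply] using hY
    set f := X.mulVecLin.restrict hX' with hf
    set g := Y.mulVecLin.restrict hY' with hg
    have hcomm : g ∘ₗ f - f ∘ₗ g = (LinearMap.id : W →ₗ[ℂ] W) := by
      ext x
      have hx := key (x : Fin n → ℂ)
      have hwx : (∑ j, w j * (x : Fin n → ℂ) j) = 0 := hw _ x.2
      simp only [LinearMap.sub_apply, LinearMap.comp_apply, LinearMap.id_apply,
        LinearMap.restrict_apply, Matrix.mulVecLin_apply, hf, hg,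
        AddSubgroupClass.coe_sub]
      rw [hx, hwx, zero_smul, add_zero]
    have htr : (0 : ℂ) = Module.finrank ℂ W := by
      calc (0 : ℂ) = LinearMap.trace ℂ W (g ∘ₗ f) - LinearMap.trace ℂ W (f ∘ₗ g) := by
            rw [LinearMap.trace_comp_comm' f g, sub_self]
        _ = LinearMap.trace ℂ W (g ∘ₗ f - f ∘ₗ g) :=
            (LinearMap.map_sub (LinearMap.trace ℂ (↥W)) (g ∘ₗ f) (f ∘ₗ g)).symm
        _ = LinearMap.trace ℂ W LinearMap.id := by rw [hcomm]
        _ = Module.finrank ℂ W := LinearMap.trace_id ℂ W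
    have : Module.finrank ℂ W = 0 := by exact_mod_cast htr.symm
    exact Submodule.finrank_eq_zero.mp this
  · -- (b) trace argument on the quotient by W.
    intro W hX hY hv
    have hX' : W ≤ W.comap X.mulVecLin := by
      intro x hx; simpa [Matrix.mulVecLin_apply] using hX x hx
    have hY' : W ≤ W.comap Y.mulVecLin := by
      intro x hx; simpa [Matrix.mulVecLin_apply] using hY x hx
    set f := W.mapQ W X.mulVecLin hX' with hf
    set g := W.mapQ W Y.mulVecLin hY' with hg
    have hcomm : g ∘ₗ f - f ∘ₗ g = (LinearMap.id : _ →ₗ[ℂ] ((Fin n → ℂ) ⧸ W)) := by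
      apply Submodule.linearMap_qext
      refine LinearMap.ext fun x => ?_
      simp only [LinearMap.comp_apply, LinearMap.sub_apply, Submodule.mkQ_apply,
        hf, hg, Submodule.mapQ_apply, Matrix.mulVecLin_apply, LinearMap.id_apply]
      rw [← Submodule.Quotient.mk_sub, key x, Submodule.Quotient.mk_add]
      have : Submodule.Quotient.mk ((∑ j, w j * x j) • v)
          = (0 : (Fin n → ℂ) ⧸ W) := by
        rw [Submodule.Quotient.mk_eq_zero]
        exact W.smul_mem _ hv
      rw [this, add_zero]
    have htr : (0 : ℂ) = Module.finrank ℂ ((Fin n → ℂ) ⧸ W) := by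
      calc (0 : ℂ) = LinearMap.trace ℂ _ (g ∘ₗ f) - LinearMap.trace ℂ _ (f ∘ₗ g) := by
            rw [LinearMap.trace_comp_comm' f g, sub_self]
        _ = LinearMap.trace ℂ _ (g ∘ₗ f - f ∘ₗ g) :=
            (LinearMap.map_sub (LinearMap.trace ℂ ((Fin n → ℂ) ⧸ W)) (g ∘ₗ f) (f ∘ₗ g)).symm
        _ = LinearMap.trace ℂ _ LinearMap.id := by rw [hcomm]
        _ = Module.finrank ℂ ((Fin n → ℂ) ⧸ W) := LinearMap.trace_id ℂ _
    have hz : Module.finrank ℂ ((Fin n → ℂ) ⧸ W) = 0 := by exact_mod_cast htr.symm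
    have hsub : Subsingleton ((Fin n → ℂ) ⧸ W) := Module.finrank_zero_iff.mp hz
    rw [eq_top_iff]
    intro x _
    rw [← Submodule.Quotient.mk_eq_zero W]
    exact Subsingleton.elim _ _
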